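/- Let Z be the realization of model C started from •^ℤ with i.i.d. uniform updates, and let d_n = P(Z_{0,n} = •). Then d_n equals the probability that a lazy random walk started at 1, with i.i.d. increments distributed as ρ = ¼δ_{−1} + ½δ_0 + ¼δ_1, stays ≥ 1 at all times 0,1,…,n. Equivalently, d_n = P(T > 2n) for T the first hitting time of 2 by the simple symmetric random walk started at 0. -/

import Mathlib

open MeasureTheory ProbabilityTheory
open scoped ENNReal

/-!
Conventions: a configuration of model C is `z : ℤ → Bool` (`false` = ∘ empty,
`true` = • particle); an update is `u : ℤ → Bool` (`true` = ↑, `false` = →).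
-/

/-- The local map `𝒞` of model C: the `i`-th coordinate of `𝒞(z,u)` is `•` iff
`(z_{i-1}z_i, u_{i-1}u_i) ∈ {(•∘, →⋅), (∘•, ⋅↑), (••, ↑↑), (••, →⋅)}`. -/
def modelC (z u : ℤ → Bool) : ℤ → Bool := fun i =>
  match z (i - 1), z i with
  | true, false => !u (i - 1)
  | false, true => u i
  | true, true => !u (i - 1) || u i
  | false, false => false

lemma modelC_apply (z u : ℤ → Bool) (i : ℤ) :
    modelC z u i = ((z (i-1) && !u (i-1)) || (z i && u i)) := by
  unfold modelC
  rcases h1 : z (i-1) <;> rcases h2 : z i <;> simp [h1, h2]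

/-- iterate of model C from the all-`true` configuration, environment `e`. -/
def FZ (e : ℤ × ℕ → Bool) : ℕ → (ℤ → Bool)
  | 0 => fun _ => true
  | n+1 => modelC (FZ e n) (fun j => e (j, n))

/-- left boundary walk -/
def wA (e : ℤ × ℕ → Bool) (lev : ℕ → ℕ) (a : ℤ) : ℕ → ℤ
  | 0 => a
  | k+1 => wA e lev a k - (if e (wA e lev a k - 1, lev k) then 0 else 1)

/-- right boundary walk -/
def wB (e : ℤ × ℕ → Bool) (lev : ℕ → ℕ) (b : ℤ) : ℕ → ℤ
  | 0 => b
  | k+1 => wB e lev b k - (if e (wB e lev b k, lev k) then 0 else 1)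

/-- there is a particle of `z` in `[a,b]` -/
def hasP (z : ℤ → Bool) (a b : ℤ) : Prop := ∃ j, a ≤ j ∧ j ≤ b ∧ z j = true

lemma hasP_le {z : ℤ → Bool} {a b : ℤ} (h : hasP z a b) : a ≤ b := by
  obtain ⟨j, h1, h2, _⟩ := h; omega

lemma key_step (z u : ℤ → Bool) (a b : ℤ) :
    hasP (modelC z u) a b ↔
      hasP z (a - (if u (a-1) then 0 else 1)) (b - (if u b then 0 else 1)) := by
  constructor
  · rintro ⟨j, haj, hjb, hj⟩
    rw [modelC_apply] at hj
    rcases Bool.or_eq_true_iff.1 hj with h | h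
    · rw [Bool.and_eq_true, Bool.not_eq_true'] at h
      refine ⟨j - 1, ?_, ?_, h.1⟩
      · rcases le_or_gt a (j-1) with h' | h'
        · split <;> omega
        · have : j = a := by omega
          have : u (a-1) = false := by rw [← this]; exact h.2
          simp [this]; omega
      · split <;> omega
    · rw [Bool.and_eq_true] at h
      refine ⟨j, ?_, ?_, h.1⟩
      · split <;> omega
      · rcases le_or_gt j (b-1) with h' | h'
        · split <;> omega
        · have : j = b := by omega
          have : u b = true := by rw [← this]; exact h.2
          simp [this]; omega
  · rintro ⟨j, haj, hjb, hj⟩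
    rcases hu : u j with _ | _
    · -- u j = false : witness j+1
      refine ⟨j + 1, ?_, ?_, ?_⟩
      · split at haj <;> omega
      · -- j + 1 ≤ b
        rcases hb : u b with _ | _
        · simp [hb] at hjb; omega
        · simp [hb] at hjb
          have : j ≠ b := fun h => by rw [h] at hu; rw [hu] at hb; exact Bool.noConfusion hb
          omega
      · rw [modelC_apply]
        have : j + 1 - 1 = j := by omega
        rw [this, hj, hu]
        simp
    · -- u j = true : witness j
      refine ⟨j, ?_, ?_, ?_⟩
      · rcases le_or_gt a j with h' | h'
        · exact h'
        · exfalso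
          have hja : j = a - 1 := by split at haj <;> omega
          rw [hja] at hu
          simp [hu] at haj
          omega
      · split at hjb <;> omega
      · rw [modelC_apply, hj, hu]; simp

lemma pathwise_aux (e : ℤ × ℕ → Bool) (n : ℕ) :
    ∀ m ≤ n, (FZ e n 0 = true ↔
      ((∀ k ≤ m, wA e (fun k => n - 1 - k) 0 k ≤ wB e (fun k => n - 1 - k) 0 k) ∧
        hasP (FZ e (n - m)) (wA e (fun k => n - 1 - k) 0 m) (wB e (fun k => n - 1 - k) 0 m))) := by
  intro m
  induction m with
  | zero =>
    intro _
    simp only [Nat.sub_zero]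
    constructor
    · intro h
      exact ⟨by intro k hk; interval_cases k; simp [wA, wB], ⟨0, le_refl _, le_refl _, by simpa [wA, wB] using h⟩⟩
    · rintro ⟨-, j, h1, h2, h3⟩
      simp only [wA, wB] at h1 h2
      have : j = 0 := by omega
      rwa [this] at h3
  | succ m ih =>
    intro hm
    have hmn : m < n := hm
    rw [ih (Nat.le_of_lt hmn)]
    have hfz : FZ e (n - m) = modelC (FZ e (n - m - 1)) (fun j => e (j, n - m - 1)) := by
      have h1 : n - m = (n - m - 1) + 1 := by omega
      rw [h1]; rfl
    have hlev : n - m - 1 = n - 1 - m := by omega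
    have hks := key_step (FZ e (n - m - 1)) (fun j => e (j, n - m - 1))
      (wA e (fun k => n - 1 - k) 0 m) (wB e (fun k => n - 1 - k) 0 m)
    rw [hfz, hks]
    have hA : wA e (fun k => n - 1 - k) 0 (m+1) =
        wA e (fun k => n - 1 - k) 0 m -
          (if e (wA e (fun k => n - 1 - k) 0 m - 1, n - m - 1) then 0 else 1) := by
      rw [wA]; rw [hlev]
    have hB : wB e (fun k => n - 1 - k) 0 (m+1) =
        wB e (fun k => n - 1 - k) 0 m -
          (if e (wB e (fun k => n - 1 - k) 0 m, n - m - 1) then 0 else 1) := by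
      rw [wB]; rw [hlev]
    rw [← hA, ← hB]
    constructor
    · rintro ⟨hall, hp⟩
      refine ⟨?_, hp⟩
      intro k hk
      rcases Nat.lt_succ_iff_lt_or_eq.1 (Nat.lt_succ_of_le hk) with h | h
      · exact hall k (by omega)
      · rw [h]; exact hasP_le hp
    · rintro ⟨hall, hp⟩
      exact ⟨fun k hk => hall k (by omega), hp⟩

/-- the pathwise identity: a particle sits at the origin at time `n` iff the dual
interval walk stays alive for `n` steps. -/
lemma pathwise (e : ℤ × ℕ → Bool) (n : ℕ) :
    FZ e n 0 = true ↔
      ∀ k ≤ n, wA e (fun k => n - 1 - k) 0 k ≤ wB e (fun k => n - 1 - k) 0 k := by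
  rw [pathwise_aux e n n (le_refl n)]
  constructor
  · exact fun h => h.1
  · intro h
    refine ⟨h, ⟨wA e (fun k => n - 1 - k) 0 n, le_refl _, h n (le_refl n), by simp [FZ]⟩⟩

noncomputable def Qrec (A : ℤ → Prop) [DecidablePred A] (V : Finset ℤ) (w : ℤ → ℝ≥0∞) :
    ℕ → ℤ → ℝ≥0∞
  | 0 => fun x => if A x then 1 else 0
  | n+1 => fun x => if A x then ∑ v ∈ V, w v * Qrec A V w n (x+v) else 0

lemma half_mul_half : (2⁻¹:ℝ≥0∞)*2⁻¹ = 4⁻¹ := by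
  rw [← ENNReal.mul_inv (by norm_num) (by norm_num)]
  norm_num

lemma quarter_add_quarter : (4⁻¹:ℝ≥0∞) + 4⁻¹ = 2⁻¹ := by
  rw [← half_mul_half, ← mul_add, ENNReal.inv_two_add_inv_two, mul_one]

lemma qqh : (4⁻¹:ℝ≥0∞) + 2⁻¹ + 4⁻¹ = 1 := by
  rw [add_right_comm, quarter_add_quarter, ENNReal.inv_two_add_inv_two]

noncomputable def wlazy : ℤ → ℝ≥0∞ := fun v => if v = 0 then 2⁻¹ else 4⁻¹

noncomputable def qC : ℕ → ℤ → ℝ≥0∞ := Qrec (fun x => 1 ≤ x) ({-1,0,1} : Finset ℤ) wlazy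

noncomputable def rC : ℕ → ℤ → ℝ≥0∞ :=
  Qrec (fun x => x ≤ 1) ({-1,1} : Finset ℤ) (fun _ => 2⁻¹)

lemma combine (a b c : ℝ≥0∞) :
    2⁻¹*(2⁻¹*a + 2⁻¹*b) + 2⁻¹*(2⁻¹*b + 2⁻¹*c) = 4⁻¹*a + 2⁻¹*b + 4⁻¹*c := by
  simp only [mul_add, ← mul_assoc, half_mul_half]
  rw [show (4⁻¹:ℝ≥0∞)*a + 4⁻¹*b + (4⁻¹*b + 4⁻¹*c) = 4⁻¹*a + (4⁻¹+4⁻¹)*b + 4⁻¹*c from by ring,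
      quarter_add_quarter]

lemma qC_succ (n : ℕ) (x : ℤ) :
    qC (n+1) x = if 1 ≤ x then 4⁻¹ * qC n (x-1) + 2⁻¹ * qC n x + 4⁻¹ * qC n (x+1) else 0 := by
  unfold qC
  rw [Qrec]
  dsimp only
  by_cases hx : 1 ≤ x
  · rw [if_pos hx, if_pos hx]
    rw [show ({-1,0,1} : Finset ℤ) = insert (-1) (insert 0 {1}) from rfl]
    rw [Finset.sum_insert (by decide), Finset.sum_insert (by decide), Finset.sum_singleton]
    simp only [wlazy]
    norm_num
    rw [show x + -1 = x - 1 from by ring]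
    ring
  · rw [if_neg hx, if_neg hx]

lemma rC_succ (n : ℕ) (x : ℤ) :
    rC (n+1) x = if x ≤ 1 then 2⁻¹ * rC n (x-1) + 2⁻¹ * rC n (x+1) else 0 := by
  unfold rC
  rw [Qrec]
  dsimp only
  by_cases hx : x ≤ 1
  · rw [if_pos hx, if_pos hx]
    rw [show ({-1,1} : Finset ℤ) = insert (-1) {1} from rfl]
    rw [Finset.sum_insert (by decide), Finset.sum_singleton]
    rw [show x + -1 = x - 1 from by ring]
  · rw [if_neg hx, if_neg hx]

lemma qC_zero (x : ℤ) : qC 0 x = if 1 ≤ x then 1 else 0 := rfl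
lemma rC_zero (x : ℤ) : rC 0 x = if x ≤ 1 then 1 else 0 := rfl

/-- bridge: lazy walk survival = SSRW survival at doubled time. -/
lemma qC_eq_rC : ∀ (n : ℕ) (l : ℤ), qC n l = rC (2*n) (2 - 2*l) := by
  intro n
  induction n with
  | zero =>
    intro l
    rw [qC_zero, rC_zero]
    by_cases h : 1 ≤ l
    · rw [if_pos h, if_pos (by omega)]
    · rw [if_neg h, if_neg (by omega)]
  | succ n ih =>
    intro l
    rw [qC_succ]
    have h2 : 2*(n+1) = (2*n+1)+1 := by ring
    rw [h2, rC_succ]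
    by_cases hl : 1 ≤ l
    · rw [if_pos hl, if_pos (by omega)]
      rw [rC_succ, rC_succ]
      rw [if_pos (by omega), if_pos (by omega)]
      rw [ih (l-1), ih l, ih (l+1)]
      rw [show (2:ℤ) - 2*l - 1 - 1 = 2 - 2*(l+1) from by ring,
          show (2:ℤ) - 2*l - 1 + 1 = 2 - 2*l from by ring,
          show (2:ℤ) - 2*l + 1 - 1 = 2 - 2*l from by ring,
          show (2:ℤ) - 2*l + 1 + 1 = 2 - 2*(l-1) from by ring]
      rw [combine]
      ring
    · rw [if_neg hl, if_neg (by omega)]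

lemma wA_bounds (e : ℤ × ℕ → Bool) (lev : ℕ → ℕ) (a : ℤ) (k : ℕ) :
    a - k ≤ wA e lev a k ∧ wA e lev a k ≤ a := by
  induction k with
  | zero => simp [wA]
  | succ k ih =>
    rw [wA]
    split <;> push_cast <;> omega

lemma wB_bounds (e : ℤ × ℕ → Bool) (lev : ℕ → ℕ) (b : ℤ) (k : ℕ) :
    b - k ≤ wB e lev b k ∧ wB e lev b k ≤ b := by
  induction k with
  | zero => simp [wB]
  | succ k ih =>
    rw [wB]
    split <;> push_cast <;> omega

lemma wA_congr {e e' : ℤ × ℕ → Bool} (lev : ℕ → ℕ) (a : ℤ) (k : ℕ)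
    (h : ∀ i m, a - k ≤ i → i ≤ a - 1 → (∃ j, j < k ∧ m = lev j) → e (i, m) = e' (i, m)) :
    wA e lev a k = wA e' lev a k := by
  induction k with
  | zero => rfl
  | succ k ih =>
    have hk : wA e lev a k = wA e' lev a k := by
      refine ih (fun i m h1 h2 h3 => ?_)
      obtain ⟨j, hj, hm⟩ := h3
      exact h i m (by push_cast at h1 ⊢; omega) h2 ⟨j, by omega, hm⟩
    have hb := wA_bounds e' lev a k
    rw [wA, wA, hk, h _ _ (by push_cast; omega) (by omega) ⟨k, by omega, rfl⟩]

lemma wB_congr {e e' : ℤ × ℕ → Bool} (lev : ℕ → ℕ) (b : ℤ) (k : ℕ)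
    (h : ∀ i m, b - k ≤ i → i ≤ b → (∃ j, j < k ∧ m = lev j) → e (i, m) = e' (i, m)) :
    wB e lev b k = wB e' lev b k := by
  induction k with
  | zero => rfl
  | succ k ih =>
    have hk : wB e lev b k = wB e' lev b k := by
      refine ih (fun i m h1 h2 h3 => ?_)
      obtain ⟨j, hj, hm⟩ := h3
      exact h i m (by push_cast at h1 ⊢; omega) h2 ⟨j, by omega, hm⟩
    have hb := wB_bounds e' lev b k
    rw [wB, wB, hk, h _ _ (by push_cast; omega) (by omega) ⟨k, by omega, rfl⟩]

lemma wA_shift (e : ℤ × ℕ → Bool) (lev : ℕ → ℕ) (a : ℤ) (k : ℕ) :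
    wA e lev a (k+1)
      = wA e (fun j => lev (j+1)) (a - (if e (a-1, lev 0) then 0 else 1)) k := by
  induction k with
  | zero => rfl
  | succ k ih =>
    conv_lhs => rw [wA, ih]
    rfl

lemma wB_shift (e : ℤ × ℕ → Bool) (lev : ℕ → ℕ) (b : ℤ) (k : ℕ) :
    wB e lev b (k+1)
      = wB e (fun j => lev (j+1)) (b - (if e (b, lev 0) then 0 else 1)) k := by
  induction k with
  | zero => rfl
  | succ k ih =>
    conv_lhs => rw [wB, ih]
    rfl

lemma measure_split_bool {Ω : Type*} [MeasurableSpace Ω] (μ : Measure Ω) {f : Ω → Bool}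
    (hf : Measurable f) (E : Set Ω) :
    μ E = μ (E ∩ f ⁻¹' {true}) + μ (E ∩ f ⁻¹' {false}) := by
  have h1 := measure_inter_add_diff (μ := μ) E (hf (MeasurableSet.singleton true))
  have h2 : E \ f ⁻¹' {true} = E ∩ f ⁻¹' {false} := by
    ext ω
    simp only [Set.mem_diff, Set.mem_inter_iff, Set.mem_preimage, Set.mem_singleton_iff]
    rcases hb : f ω <;> simp
  rw [h2] at h1
  exact h1.symm

lemma qC_nonpos {n : ℕ} {l : ℤ} (hl : l ≤ 0) : qC n l = 0 := by
  cases n with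
  | zero => rw [qC_zero, if_neg (by omega)]
  | succ n => rw [qC_succ, if_neg (by omega)]

lemma interval_survival {Ω : Type*} [MeasurableSpace Ω] (P : Measure Ω) [IsProbabilityMeasure P]
    (U : ℤ × ℕ → Ω → Bool) (hUmeas : ∀ p, Measurable (U p))
    (hUindep : iIndepFun U P)
    (hUunif : ∀ p, P (U p ⁻¹' {true}) = 2⁻¹) :
    ∀ (n : ℕ) (lev : ℕ → ℕ), Set.InjOn lev (Set.Iio (n : ℕ)) → ∀ (a b : ℤ),
      P {ω | ∀ k ≤ n, wA (fun p => U p ω) lev a k ≤ wB (fun p => U p ω) lev b k}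
        = qC n (b - a + 1) := by
  have hUfalse : ∀ p, P (U p ⁻¹' {false}) = 2⁻¹ := by
    intro p
    have h := measure_split_bool P (hUmeas p) Set.univ
    simp only [Set.univ_inter, measure_univ] at h
    rw [hUunif p] at h
    have hne : P (U p ⁻¹' {false}) ≠ ⊤ := measure_ne_top _ _
    -- 1 = 2⁻¹ + x → x = 2⁻¹
    have : (1:ℝ≥0∞) = 2⁻¹ + 2⁻¹ := ENNReal.inv_two_add_inv_two.symm
    rw [this] at h
    exact (ENNReal.add_right_inj (by norm_num)).1 h.symm
  intro n
  induction n with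
  | zero =>
    intro lev _ a b
    by_cases hab : a ≤ b
    · have : {ω : Ω | ∀ k ≤ 0, wA (fun p => U p ω) lev a k ≤ wB (fun p => U p ω) lev b k}
          = Set.univ := by
        ext ω
        simp only [Set.mem_setOf_eq, Set.mem_univ, iff_true]
        intro k hk
        interval_cases k
        exact hab
      rw [this, measure_univ, qC_zero, if_pos (by omega)]
    · have : {ω : Ω | ∀ k ≤ 0, wA (fun p => U p ω) lev a k ≤ wB (fun p => U p ω) lev b k}
          = ∅ := by
        ext ω
        simp only [Set.mem_setOf_eq, Set.mem_empty_iff_false, iff_false]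
        intro hc
        exact hab (hc 0 (le_refl _))
      rw [this, measure_empty, qC_zero, if_neg (by omega)]
  | succ n ih =>
    intro lev hinj a b
    set E := {ω : Ω | ∀ k ≤ n+1, wA (fun p => U p ω) lev a k ≤ wB (fun p => U p ω) lev b k}
      with hE
    by_cases hab : a ≤ b
    swap
    · have : E = ∅ := by
        ext ω
        simp only [hE, Set.mem_setOf_eq, Set.mem_empty_iff_false, iff_false]
        intro hc
        exact hab (hc 0 (by omega))
      rw [this, measure_empty, qC_nonpos (by omega)]
    -- the two fresh bits
    set p : ℤ × ℕ := (a - 1, lev 0) with hp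
    set q : ℤ × ℕ := (b, lev 0) with hq
    have hpq : p ≠ q := by
      intro hc
      have h1 : p.1 = q.1 := by rw [hc]
      rw [hp, hq] at h1
      simp only at h1
      omega
    set lev' : ℕ → ℕ := fun j => lev (j+1) with hlev'
    have hinj' : Set.InjOn lev' (Set.Iio (n : ℕ)) := by
      intro i hi j hj hij
      have hi' := Set.mem_Iio.1 hi
      have hj' := Set.mem_Iio.1 hj
      have hij' : lev (i+1) = lev (j+1) := hij
      have := hinj (Set.mem_Iio.2 (by omega : i+1 < n+1)) (Set.mem_Iio.2 (by omega : j+1 < n+1)) hij'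
      omega
    -- slice events
    have hslice : ∀ x y : Bool,
        E ∩ (U p ⁻¹' {x} ∩ U q ⁻¹' {y})
          = (U p ⁻¹' {x} ∩ U q ⁻¹' {y}) ∩
            {ω : Ω | ∀ k ≤ n, wA (fun r => U r ω) lev' (a - (if x then 0 else 1)) k
              ≤ wB (fun r => U r ω) lev' (b - (if y then 0 else 1)) k} := by
      intro x y
      ext ω
      simp only [hE, Set.mem_inter_iff, Set.mem_setOf_eq, Set.mem_preimage,
        Set.mem_singleton_iff]
      constructor
      · rintro ⟨hEω, hx, hy⟩
        refine ⟨⟨hx, hy⟩, fun k hk => ?_⟩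
        have h1 := hEω (k+1) (by omega)
        rw [wA_shift, wB_shift] at h1
        rw [← hp, hx, ← hq, hy] at h1
        exact h1
      · rintro ⟨⟨hx, hy⟩, hω⟩
        refine ⟨fun k hk => ?_, hx, hy⟩
        match k with
        | 0 => exact hab
        | (k+1) =>
          rw [wA_shift, wB_shift, ← hp, hx, ← hq, hy]
          exact hω k (by omega)
    -- probability of a slice
    have hprob : ∀ x y : Bool,
        P (E ∩ (U p ⁻¹' {x} ∩ U q ⁻¹' {y}))
          = 4⁻¹ * qC n ((b - (if y then 0 else 1)) - (a - (if x then 0 else 1)) + 1) := by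
      intro x y
      rw [hslice x y]
      set a' : ℤ := a - (if x then 0 else 1) with ha'
      set b' : ℤ := b - (if y then 0 else 1) with hb'
      set E' := {ω : Ω | ∀ k ≤ n, wA (fun r => U r ω) lev' a' k
          ≤ wB (fun r => U r ω) lev' b' k} with hE'
      -- index sets
      set S : Finset (ℤ × ℕ) := {p, q} with hS
      set T : Finset (ℤ × ℕ) :=
        (Finset.Icc (a' - (n+1)) b') ×ˢ ((Finset.range n).image lev') with hT
      have hdisj : Disjoint S T := by
        rw [Finset.disjoint_left]
        intro r hr hrT
        rw [hT, Finset.mem_product] at hrT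
        obtain ⟨-, h2⟩ := hrT
        rw [Finset.mem_image] at h2
        obtain ⟨j, hj, hjr⟩ := h2
        rw [Finset.mem_range] at hj
        have hr2 : r.2 = lev 0 := by
          rw [hS, Finset.mem_insert, Finset.mem_singleton] at hr
          rcases hr with h | h <;> rw [h]
        have : lev (j+1) = lev 0 := by rw [← hr2, ← hjr]
        have := hinj (Set.mem_Iio.2 (by omega : j+1 < n+1)) (Set.mem_Iio.2 (by omega : 0 < n+1)) this
        omega
      have hIF := hUindep.indepFun_finset S T hdisj hUmeas
      -- membership handles
      have hpS : p ∈ S := by rw [hS]; exact Finset.mem_insert_self _ _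
      have hqS : q ∈ S := by rw [hS]; exact Finset.mem_insert_of_mem (Finset.mem_singleton_self _)
      -- prefix event as preimage
      set MS : Set ((r : S) → Bool) := {g | g ⟨p, hpS⟩ = x ∧ g ⟨q, hqS⟩ = y} with hMS
      have hpre1 : U p ⁻¹' {x} ∩ U q ⁻¹' {y} = (fun ω (r : S) => U (r : ℤ × ℕ) ω) ⁻¹' MS := by
        ext ω
        simp only [hMS, Set.mem_inter_iff, Set.mem_preimage, Set.mem_singleton_iff,
          Set.mem_setOf_eq]
      -- tail event as preimage
      set ext : ((r : T) → Bool) → (ℤ × ℕ → Bool) :=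
        fun g r => if h : r ∈ T then g ⟨r, h⟩ else false with hext
      set MT : Set ((r : T) → Bool) :=
        {g | ∀ k ≤ n, wA (ext g) lev' a' k ≤ wB (ext g) lev' b' k} with hMT
      have hmemA : ∀ (i : ℤ) (m : ℕ), a' - n ≤ i → i ≤ a' - 1 →
          (∃ j, j < n ∧ m = lev' j) → (i, m) ∈ T := by
        intro i m h1 h2 h3
        obtain ⟨j, hj, hm⟩ := h3
        rw [hT, Finset.mem_product, Finset.mem_Icc, Finset.mem_image]
        constructor
        · constructor
          · push_cast; omega
          · have : a' - 1 ≤ b' := by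
              rw [ha', hb']
              split <;> split <;> omega
            omega
        · exact ⟨j, Finset.mem_range.2 hj, hm.symm⟩
      have hmemB : ∀ (i : ℤ) (m : ℕ), b' - n ≤ i → i ≤ b' →
          (∃ j, j < n ∧ m = lev' j) → (i, m) ∈ T := by
        intro i m h1 h2 h3
        obtain ⟨j, hj, hm⟩ := h3
        rw [hT, Finset.mem_product, Finset.mem_Icc, Finset.mem_image]
        constructor
        · constructor
          · have : a' - 1 ≤ b' := by
              rw [ha', hb']
              split <;> split <;> omega
            push_cast; omega
          · omega
        · exact ⟨j, Finset.mem_range.2 hj, hm.symm⟩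
      have hpre2 : E' = (fun ω (r : T) => U (r : ℤ × ℕ) ω) ⁻¹' MT := by
        ext ω
        simp only [hE', hMT, Set.mem_setOf_eq, Set.mem_preimage]
        have hgext : ∀ k ≤ n,
            wA (ext (fun (r : T) => U (r : ℤ × ℕ) ω)) lev' a' k
              = wA (fun r => U r ω) lev' a' k
            ∧ wB (ext (fun (r : T) => U (r : ℤ × ℕ) ω)) lev' b' k
              = wB (fun r => U r ω) lev' b' k := by
          intro k hk
          constructor
          · refine wA_congr lev' a' k (fun i m h1 h2 h3 => ?_)
            obtain ⟨j, hj, hm⟩ := h3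
            have hmem : (i, m) ∈ T := hmemA i m (by push_cast at h1 ⊢; omega) h2 ⟨j, by omega, hm⟩
            rw [hext]
            simp only [hmem, dif_pos]
          · refine wB_congr lev' b' k (fun i m h1 h2 h3 => ?_)
            obtain ⟨j, hj, hm⟩ := h3
            have hmem : (i, m) ∈ T := hmemB i m (by push_cast at h1 ⊢; omega) h2 ⟨j, by omega, hm⟩
            rw [hext]
            simp only [hmem, dif_pos]
        constructor
        · intro h k hk
          rw [(hgext k hk).1, (hgext k hk).2]
          exact h k hk
        · intro h k hk
          have := h k hk
          rwa [(hgext k hk).1, (hgext k hk).2] at this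
      have hMTmeas : MeasurableSet MT := .of_discrete
      have hMSmeas : MeasurableSet MS := .of_discrete
      have hprod := hIF.measure_inter_preimage_eq_mul MS MT hMSmeas hMTmeas
      rw [hpre1, hpre2, hprod]
      -- prefix probability is 1/4
      have hhalf : P (U p ⁻¹' {x}) = 2⁻¹ := by cases x; exacts [hUfalse p, hUunif p]
      have hhalf' : P (U q ⁻¹' {y}) = 2⁻¹ := by cases y; exacts [hUfalse q, hUunif q]
      have hquarter : P ((fun ω (r : S) => U (r : ℤ × ℕ) ω) ⁻¹' MS) = 4⁻¹ := by
        rw [← hpre1]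
        have hind2 := (hUindep.indepFun hpq).measure_inter_preimage_eq_mul
          ({x} : Set Bool) ({y} : Set Bool) (.of_discrete) (.of_discrete)
        rw [hind2, hhalf, hhalf', half_mul_half]
      rw [hquarter, ← hpre2, hE', ih lev' hinj' a' b']
    -- sum over the four slices
    have hsplit1 := measure_split_bool P (hUmeas p) E
    have hsplit2t := measure_split_bool P (hUmeas q) (E ∩ U p ⁻¹' {true})
    have hsplit2f := measure_split_bool P (hUmeas q) (E ∩ U p ⁻¹' {false})
    simp only [Set.inter_assoc] at hsplit2t hsplit2f
    rw [hsplit1, hsplit2t, hsplit2f]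
    rw [hprob true true, hprob true false, hprob false true, hprob false false]
    norm_num
    rw [qC_succ, if_pos (by omega : (1:ℤ) ≤ b - a + 1)]
    rw [show b - 1 - a + 1 = b - a + 1 - 1 from by ring,
        show b - (a - 1) + 1 = b - a + 1 + 1 from by ring]
    rw [show (4⁻¹ : ℝ≥0∞) * qC n (b-a+1) + 4⁻¹ * qC n (b-a+1-1)
          + (4⁻¹ * qC n (b-a+1+1) + 4⁻¹ * qC n (b-a+1))
        = 4⁻¹ * qC n (b-a+1-1) + (4⁻¹ + 4⁻¹) * qC n (b-a+1) + 4⁻¹ * qC n (b-a+1+1)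
        from by ring, quarter_add_quarter]

lemma measure_partition {α : Type*} [MeasurableSpace α] (μ : Measure α) {f : α → ℤ}
    (hf : Measurable f) (E : Set α) (V : Finset ℤ) :
    μ (E ∩ f ⁻¹' ↑V) = ∑ v ∈ V, μ (E ∩ f ⁻¹' {v}) := by
  induction V using Finset.induction with
  | empty => simp
  | insert _ _ hv =>
    rename_i v W ih
    have h1 : E ∩ f ⁻¹' ↑(insert v W) = (E ∩ f ⁻¹' {v}) ∪ (E ∩ f ⁻¹' ↑W) := by
      ext ω; simp; tauto
    have hmv : MeasurableSet (f ⁻¹' ↑W) := hf .of_discrete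
    rw [h1, Finset.sum_insert hv, ← ih]
    have h2 := measure_inter_add_diff (μ := μ) ((E ∩ f ⁻¹' {v}) ∪ (E ∩ f ⁻¹' ↑W)) hmv
    have h3 : ((E ∩ f ⁻¹' {v}) ∪ (E ∩ f ⁻¹' ↑W)) ∩ f ⁻¹' ↑W = E ∩ f ⁻¹' ↑W := by
      ext ω
      simp only [Set.mem_inter_iff, Set.mem_union, Set.mem_preimage, Set.mem_singleton_iff,
        Finset.coe_insert, Set.mem_insert_iff, Finset.mem_coe]
      constructor
      · rintro ⟨h | h, hw⟩ <;> exact ⟨h.1, hw⟩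
      · intro h; exact ⟨Or.inr h, h.2⟩
    have h4 : ((E ∩ f ⁻¹' {v}) ∪ (E ∩ f ⁻¹' ↑W)) \ f ⁻¹' ↑W = E ∩ f ⁻¹' {v} := by
      ext ω
      simp only [Set.mem_diff, Set.mem_union, Set.mem_inter_iff, Set.mem_preimage,
        Set.mem_singleton_iff, Finset.mem_coe]
      constructor
      · rintro ⟨h | h, hw⟩
        · exact h
        · exact absurd h.2 hw
      · rintro ⟨he, hv'⟩
        refine ⟨Or.inl ⟨he, hv'⟩, ?_⟩
        rw [hv']
        exact fun hc => hv hc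
    rw [h3, h4] at h2
    rw [← h2, add_comm]

lemma walk_survival {Ω' : Type*} [MeasurableSpace Ω'] (P' : Measure Ω') [IsProbabilityMeasure P']
    (η : ℕ → Ω' → ℤ) (hmeas : ∀ k, Measurable (η k))
    (hindep : iIndepFun η P')
    (V : Finset ℤ) (w : ℤ → ℝ≥0∞) (hw1 : ∑ v ∈ V, w v = 1)
    (hlaw : ∀ k, ∀ v ∈ V, P' (η k ⁻¹' {v}) = w v)
    (A : ℤ → Prop) [DecidablePred A] :
    ∀ (n s : ℕ) (x : ℤ),
      P' {ω | ∀ k ≤ n, A (x + ∑ i ∈ Finset.Ico s (s+k), η i ω)} = Qrec A V w n x := by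
  intro n
  induction n with
  | zero =>
    intro s x
    by_cases hx : A x
    · have : {ω : Ω' | ∀ k ≤ 0, A (x + ∑ i ∈ Finset.Ico s (s+k), η i ω)} = Set.univ := by
        ext ω; simp only [Set.mem_setOf_eq, Set.mem_univ, iff_true]
        intro k hk
        interval_cases k
        simpa using hx
      rw [this]
      simp [Qrec, hx]
    · have : {ω : Ω' | ∀ k ≤ 0, A (x + ∑ i ∈ Finset.Ico s (s+k), η i ω)} = ∅ := by
        ext ω; simp only [Set.mem_setOf_eq, Set.mem_empty_iff_false, iff_false]
        intro h
        have := h 0 (le_refl _)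
        simp at this
        exact hx this
      rw [this]
      simp [Qrec, hx]
  | succ n ih =>
    intro s x
    set E := {ω : Ω' | ∀ k ≤ n + 1, A (x + ∑ i ∈ Finset.Ico s (s+k), η i ω)} with hE
    by_cases hx : A x
    swap
    · have : E = ∅ := by
        ext ω; simp only [hE, Set.mem_setOf_eq, Set.mem_empty_iff_false, iff_false]
        intro h
        have := h 0 (by omega)
        simp at this
        exact hx this
      rw [this]
      simp [Qrec, hx]
    -- decompose over the value of η s
    have hVfull : P' (η s ⁻¹' ↑V) = 1 := by
      have := measure_partition P' (hmeas s) Set.univ V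
      simp only [Set.univ_inter] at this
      rw [this]
      rw [Finset.sum_congr rfl (fun v hv => hlaw s v hv)]
      exact hw1
    have hEsplit : P' E = ∑ v ∈ V, P' (E ∩ η s ⁻¹' {v}) := by
      have h1 := measure_inter_add_diff (μ := P') E ((hmeas s) .of_discrete : MeasurableSet (η s ⁻¹' (↑V : Set ℤ)))
      have h2 : P' (E \ η s ⁻¹' ↑V) = 0 := by
        have hc : P' ((η s ⁻¹' ↑V)ᶜ) = 0 := by
          rw [measure_compl ((hmeas s) .of_discrete) (measure_ne_top _ _), hVfull]
          simp
        exact le_antisymm (hc ▸ measure_mono (fun ω h => h.2)) zero_le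
      rw [← measure_partition P' (hmeas s) E V, ← h1, h2, add_zero]
    rw [hEsplit]
    -- identify each slice
    have hslice : ∀ v ∈ V, P' (E ∩ η s ⁻¹' {v}) = w v * Qrec A V w n (x + v) := by
      intro v hv
      -- the continuation event
      set E' := {ω : Ω' | ∀ k ≤ n, A ((x + v) + ∑ i ∈ Finset.Ico (s+1) (s+1+k), η i ω)} with hE'
      have hpath : E ∩ η s ⁻¹' {v} = η s ⁻¹' {v} ∩ E' := by
        ext ω
        simp only [hE, hE', Set.mem_inter_iff, Set.mem_setOf_eq, Set.mem_preimage,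
          Set.mem_singleton_iff]
        constructor
        · rintro ⟨hA, hvv⟩
          refine ⟨hvv, fun k hk => ?_⟩
          have := hA (k+1) (by omega)
          have hsum : ∑ i ∈ Finset.Ico s (s + (k+1)), η i ω
              = η s ω + ∑ i ∈ Finset.Ico (s+1) (s+1+k), η i ω := by
            have hb : s + (k+1) = s+1+k := by omega
            rw [hb, Finset.sum_eq_sum_Ico_succ_bot (by omega)]
          rw [hsum, hvv] at this
          rw [add_assoc]
          exact this
        · rintro ⟨hvv, hA⟩
          refine ⟨fun k hk => ?_, hvv⟩
          match k with
          | 0 => simpa using hx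
          | (k+1) =>
            have := hA k (by omega)
            have hsum : ∑ i ∈ Finset.Ico s (s + (k+1)), η i ω
                = η s ω + ∑ i ∈ Finset.Ico (s+1) (s+1+k), η i ω := by
              have hb : s + (k+1) = s+1+k := by omega
              rw [hb, Finset.sum_eq_sum_Ico_succ_bot (by omega)]
            rw [hsum, hvv]
            rw [← add_assoc]
            exact this
      rw [hpath]
      -- independence
      set T : Finset ℕ := Finset.Icc (s+1) (s+n) with hT
      have hdisj : Disjoint ({s} : Finset ℕ) T := by
        rw [Finset.disjoint_left]
        intro a ha haT
        simp only [Finset.mem_singleton] at ha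
        rw [hT, Finset.mem_Icc] at haT
        omega
      have hIF := hindep.indepFun_finset {s} T hdisj hmeas
      -- express the two events as preimages
      set M : Set (∀ i : (T : Finset ℕ), ℤ) :=
        {g | ∀ k ≤ n, A ((x + v) + ∑ i ∈ T.attach,
          (if (i : ℕ) ∈ Finset.Ico (s+1) (s+1+k) then g i else 0))} with hM
      have hsum_eq : ∀ (ω : Ω') (k : ℕ), k ≤ n →
          (∑ i ∈ T.attach, (if (i : ℕ) ∈ Finset.Ico (s+1) (s+1+k) then η (i : ℕ) ω else 0))
            = ∑ i ∈ Finset.Ico (s+1) (s+1+k), η i ω := by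
        intro ω k hk
        rw [Finset.sum_attach T (fun i => if i ∈ Finset.Ico (s+1) (s+1+k) then η i ω else 0)]
        rw [Finset.sum_ite_mem]
        congr 1
        rw [Finset.inter_eq_right]
        intro i hi
        rw [Finset.mem_Ico] at hi
        rw [hT, Finset.mem_Icc]
        omega
      have hE'pre : E' = (fun a (i : (T : Finset ℕ)) => η (i : ℕ) a) ⁻¹' M := by
        ext ω
        simp only [hE', hM, Set.mem_setOf_eq, Set.mem_preimage]
        constructor
        · intro h k hk
          rw [hsum_eq ω k hk]
          exact h k hk
        · intro h k hk
          have := h k hk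
          rwa [hsum_eq ω k hk] at this
      have hspre : η s ⁻¹' {v}
          = (fun a (i : ({s} : Finset ℕ)) => η (i : ℕ) a) ⁻¹'
              {g | g ⟨s, Finset.mem_singleton_self s⟩ = v} := by
        ext ω
        simp only [Set.mem_preimage, Set.mem_singleton_iff, Set.mem_setOf_eq]
      have hMmeas : MeasurableSet M := by
        rw [hM]
        have : {g : (∀ i : (T : Finset ℕ), ℤ) | ∀ k ≤ n, A ((x + v) + ∑ i ∈ T.attach,
            (if (i : ℕ) ∈ Finset.Ico (s+1) (s+1+k) then g i else 0))}
            = ⋂ k ∈ Set.Iic n, (fun g : (∀ i : (T : Finset ℕ), ℤ) => (x + v) + ∑ i ∈ T.attach,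
            (if (i : ℕ) ∈ Finset.Ico (s+1) (s+1+k) then g i else 0)) ⁻¹' {y | A y} := by
          ext g
          simp [Set.mem_iInter]
        rw [this]
        refine MeasurableSet.biInter (Set.to_countable _) (fun k _ => ?_)
        have hfun : Measurable (fun g : (∀ _ : (T : Finset ℕ), ℤ) =>
            (x + v) + ∑ i ∈ T.attach, (if (i : ℕ) ∈ Finset.Ico (s+1) (s+1+k) then g i else 0)) := by
          refine Measurable.const_add ?_ _
          refine Finset.measurable_sum _ (fun i _ => ?_)
          by_cases hmem : (i : ℕ) ∈ Finset.Ico (s+1) (s+1+k)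
          · simp only [hmem, if_true]
            exact measurable_pi_apply i
          · simp only [hmem, if_false]
            exact measurable_const
        exact hfun .of_discrete
      have hprod : P' (η s ⁻¹' {v} ∩ E') = P' (η s ⁻¹' {v}) * P' E' := by
        rw [hspre, hE'pre]
        refine hIF.measure_inter_preimage_eq_mul _ _ ?_ hMmeas
        have hps : {g : (∀ _ : ({s} : Finset ℕ), ℤ) | g ⟨s, Finset.mem_singleton_self s⟩ = v}
            = (fun g : (∀ _ : ({s} : Finset ℕ), ℤ) =>
                g ⟨s, Finset.mem_singleton_self s⟩) ⁻¹' {v} := rfl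
        rw [hps]
        exact (measurable_pi_apply _) (MeasurableSet.of_discrete (s := ({v} : Set ℤ)))
      rw [hprod, hlaw s v hv]
      congr 1
      exact ih (s+1) (x+v)
    rw [Finset.sum_congr rfl hslice]
    simp [Qrec, hx]


/-- for the realization `Z` of model C started from `•^ℤ` with i.i.d.
uniform updates, the density `d_n = P(Z_{0,n} = •)` equals the probability that a lazy
random walk `W` started at `1`, with i.i.d. increments of law
`ρ = ¼δ_{-1} + ½δ_0 + ¼δ_1`, stays `≥ 1` at all times `0, 1, …, n`; equivalently,
`d_n = P(T > 2n)` for `T` the first hitting time of `2` by the simple symmetric random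
walk started at `0`. -/
theorem modelC_density_eq_walk
    -- the model C realization
    {Ω : Type*} [MeasurableSpace Ω] (P : Measure Ω) [IsProbabilityMeasure P]
    (U : ℤ × ℕ → Ω → Bool) (hUmeas : ∀ p, Measurable (U p))
    (hUindep : iIndepFun U P)
    (hUunif : ∀ p, P {ω | U p ω = true} = 1 / 2)
    (Z : ℕ → Ω → ℤ → Bool)
    (hZ0 : ∀ ω, Z 0 ω = fun _ => true)
    (hZ : ∀ n ω, Z (n + 1) ω = modelC (Z n ω) (fun i => U (i, n) ω))
    -- the lazy random walk with step distribution ρ, started at 1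
    {Ω' : Type*} [MeasurableSpace Ω'] (P' : Measure Ω') [IsProbabilityMeasure P']
    (η : ℕ → Ω' → ℤ) (hηmeas : ∀ k, Measurable (η k))
    (hηindep : iIndepFun η P')
    (hηm1 : ∀ k, P' {ω | η k ω = -1} = 1 / 4)
    (hη0 : ∀ k, P' {ω | η k ω = 0} = 1 / 2)
    (hη1 : ∀ k, P' {ω | η k ω = 1} = 1 / 4)
    (W : ℕ → Ω' → ℤ) (hW : ∀ k ω, W k ω = 1 + ∑ i ∈ Finset.range k, η i ω)
    -- the simple symmetric random walk started at 0 and its hitting time of 2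
    {Ω'' : Type*} [MeasurableSpace Ω''] (P'' : Measure Ω'') [IsProbabilityMeasure P'']
    (ξ : ℕ → Ω'' → ℤ) (hξmeas : ∀ k, Measurable (ξ k))
    (hξindep : iIndepFun ξ P'')
    (hξ1 : ∀ k, P'' {ω | ξ k ω = 1} = 1 / 2)
    (hξm1 : ∀ k, P'' {ω | ξ k ω = -1} = 1 / 2)
    (S : ℕ → Ω'' → ℤ) (hS : ∀ k ω, S k ω = ∑ i ∈ Finset.range k, ξ i ω)
    (T : Ω'' → ℕ∞) (hT : ∀ ω, T ω = ⨅ (k : ℕ) (_ : S k ω = 2), (k : ℕ∞))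
    (n : ℕ) :
    P {ω | Z n ω 0 = true} = P' {ω | ∀ k ≤ n, 1 ≤ W k ω} ∧
    P {ω | Z n ω 0 = true} = P'' {ω | ((2 * n : ℕ) : ℕ∞) < T ω} := by
  classical
  -- Step 1: the model C side equals `qC n 1`
  have hUunif' : ∀ p, P (U p ⁻¹' {true}) = 2⁻¹ := by
    intro p
    have hs : U p ⁻¹' {true} = {ω | U p ω = true} := by ext ω; simp
    rw [hs, hUunif p, one_div]
  have hZFZ : ∀ m ω, Z m ω = FZ (fun p => U p ω) m := by
    intro m
    induction m with
    | zero => intro ω; rw [hZ0]; rfl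
    | succ m ih => intro ω; rw [hZ, ih]; rfl
  have hinj : Set.InjOn (fun k => n - 1 - k : ℕ → ℕ) (Set.Iio n) := by
    intro i hi j hj hij
    have hi' := Set.mem_Iio.1 hi
    have hj' := Set.mem_Iio.1 hj
    simp only at hij
    omega
  have hZevent : {ω | Z n ω 0 = true}
      = {ω | ∀ k ≤ n, wA (fun p => U p ω) (fun k => n - 1 - k) 0 k
          ≤ wB (fun p => U p ω) (fun k => n - 1 - k) 0 k} := by
    ext ω
    rw [Set.mem_setOf_eq, Set.mem_setOf_eq, hZFZ]
    exact pathwise _ n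
  have hmodel : P {ω | Z n ω 0 = true} = qC n 1 := by
    rw [hZevent, interval_survival P U hUmeas hUindep hUunif' n _ hinj 0 0]
    norm_num
  -- Step 2: the lazy walk side equals `qC n 1`
  have hlazy : P' {ω | ∀ k ≤ n, 1 ≤ W k ω} = qC n 1 := by
    have hlaw : ∀ k, ∀ v ∈ ({-1,0,1} : Finset ℤ), P' (η k ⁻¹' {v}) = wlazy v := by
      intro k v hv
      fin_cases hv
      · show P' (η k ⁻¹' {-1}) = wlazy (-1)
        have : η k ⁻¹' {-1} = {ω | η k ω = -1} := rfl
        rw [this, hηm1 k]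
        norm_num [wlazy]
      · show P' (η k ⁻¹' {0}) = wlazy 0
        have : η k ⁻¹' {0} = {ω | η k ω = 0} := rfl
        rw [this, hη0 k]
        norm_num [wlazy]
      · show P' (η k ⁻¹' {1}) = wlazy 1
        have : η k ⁻¹' {1} = {ω | η k ω = 1} := rfl
        rw [this, hη1 k]
        norm_num [wlazy]
    have hw1 : ∑ v ∈ ({-1,0,1} : Finset ℤ), wlazy v = 1 := by
      rw [show ({-1,0,1} : Finset ℤ) = insert (-1) (insert 0 {1}) from rfl,
        Finset.sum_insert (by decide), Finset.sum_insert (by decide), Finset.sum_singleton]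
      have h1 : wlazy (-1) = 4⁻¹ := by norm_num [wlazy]
      have h2 : wlazy 0 = 2⁻¹ := by norm_num [wlazy]
      have h3 : wlazy 1 = 4⁻¹ := by norm_num [wlazy]
      rw [h1, h2, h3, ← add_assoc, qqh]
    have hws := walk_survival P' η hηmeas hηindep ({-1,0,1} : Finset ℤ) wlazy hw1 hlaw
      (fun x => 1 ≤ x) n 0 1
    have hev : {ω : Ω' | ∀ k ≤ n, (fun x => 1 ≤ x) (1 + ∑ i ∈ Finset.Ico 0 (0+k), η i ω)}
        = {ω | ∀ k ≤ n, 1 ≤ W k ω} := by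
      ext ω
      simp only [Set.mem_setOf_eq, zero_add]
      constructor
      · intro h k hk
        rw [hW, Finset.range_eq_Ico]
        exact h k hk
      · intro h k hk
        have := h k hk
        rwa [hW, Finset.range_eq_Ico] at this
    rw [hev] at hws
    rw [hws]
    rfl
  -- Step 3: the SSRW side equals `rC (2n) 0 = qC n 1`
  have hssrw : P'' {ω | ((2 * n : ℕ) : ℕ∞) < T ω} = qC n 1 := by
    have hlaw2 : ∀ k, ∀ v ∈ ({-1,1} : Finset ℤ), P'' (ξ k ⁻¹' {v}) = (fun _ : ℤ => (2⁻¹:ℝ≥0∞)) v := by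
      intro k v hv
      fin_cases hv
      · show P'' (ξ k ⁻¹' {-1}) = 2⁻¹
        have : ξ k ⁻¹' {-1} = {ω | ξ k ω = -1} := rfl
        rw [this, hξm1 k, one_div]
      · show P'' (ξ k ⁻¹' {1}) = 2⁻¹
        have : ξ k ⁻¹' {1} = {ω | ξ k ω = 1} := rfl
        rw [this, hξ1 k, one_div]
    have hw2 : ∑ v ∈ ({-1,1} : Finset ℤ), (fun _ : ℤ => (2⁻¹:ℝ≥0∞)) v = 1 := by
      rw [show ({-1,1} : Finset ℤ) = insert (-1) {1} from rfl,
        Finset.sum_insert (by decide), Finset.sum_singleton]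
      exact ENNReal.inv_two_add_inv_two
    have hws := walk_survival P'' ξ hξmeas hξindep ({-1,1} : Finset ℤ) _ hw2 hlaw2
      (fun x => x ≤ 1) (2*n) 0 0
    -- the good event
    set G : Set Ω'' := {ω | ∀ i < 2*n, ξ i ω = 1 ∨ ξ i ω = -1} with hG
    have hGm : MeasurableSet G := by
      have : G = ⋂ i ∈ Finset.range (2*n), (ξ i ⁻¹' {1} ∪ ξ i ⁻¹' {-1}) := by
        ext ω
        simp only [hG, Set.mem_setOf_eq, Set.mem_iInter, Finset.mem_range, Set.mem_union,
          Set.mem_preimage, Set.mem_singleton_iff]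
      rw [this]
      exact MeasurableSet.biInter (Finset.range (2*n)).countable_toSet
        (fun i _ => ((hξmeas i) (.of_discrete)).union ((hξmeas i) (.of_discrete)))
    have hGc : P'' Gᶜ = 0 := by
      have hsub : Gᶜ ⊆ ⋃ i ∈ Finset.range (2*n), (ξ i ⁻¹' {1} ∪ ξ i ⁻¹' {-1})ᶜ := by
        intro ω hω
        simp only [hG, Set.mem_compl_iff, Set.mem_setOf_eq, not_forall] at hω
        obtain ⟨i, hi, hne⟩ := hω
        simp only [Set.mem_iUnion, Finset.mem_range]
        refine ⟨i, hi, ?_⟩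
        simp only [Set.mem_compl_iff, Set.mem_union, Set.mem_preimage, Set.mem_singleton_iff]
        tauto
      have hnull : ∀ i, P'' ((ξ i ⁻¹' {1} ∪ ξ i ⁻¹' {-1})ᶜ) = 0 := by
        intro i
        have hdisj : Disjoint (ξ i ⁻¹' {1}) (ξ i ⁻¹' {-1}) := by
          rw [Set.disjoint_left]
          intro ω h1 h2
          simp only [Set.mem_preimage, Set.mem_singleton_iff] at h1 h2
          omega
        have hone : P'' (ξ i ⁻¹' {1} ∪ ξ i ⁻¹' {-1}) = 1 := by
          rw [measure_union hdisj ((hξmeas i) (.of_discrete))]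
          have e1 : ξ i ⁻¹' {1} = {ω | ξ i ω = 1} := rfl
          have e2 : ξ i ⁻¹' {-1} = {ω | ξ i ω = -1} := rfl
          rw [e1, e2, hξ1 i, hξm1 i, one_div, ENNReal.inv_two_add_inv_two]
        rw [measure_compl (((hξmeas i) (.of_discrete)).union ((hξmeas i) (.of_discrete)))
          (measure_ne_top _ _), hone]
        simp
      have := (measure_biUnion_null_iff (Finset.range (2*n)).countable_toSet).2
        (fun i _ => hnull i)
      exact le_antisymm (this ▸ measure_mono hsub) zero_le
    -- hitting-time characterization
    have hTlt : ∀ ω, (((2*n : ℕ):ℕ∞) < T ω ↔ ∀ k, S k ω = 2 → 2*n < k) := by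
      intro ω
      rw [hT ω]
      constructor
      · intro h k hk
        have hle : (⨅ (k:ℕ) (_ : S k ω = 2), (k:ℕ∞)) ≤ (k:ℕ∞) := iInf₂_le k hk
        have := lt_of_lt_of_le h hle
        exact_mod_cast this
      · intro h
        have h1 : ((2*n+1 : ℕ):ℕ∞) ≤ ⨅ (k:ℕ) (_ : S k ω = 2), (k:ℕ∞) := by
          refine le_iInf fun k => le_iInf fun hk => ?_
          have := h k hk
          exact_mod_cast (by omega : 2*n+1 ≤ k)
        calc ((2*n:ℕ):ℕ∞) < ((2*n+1:ℕ):ℕ∞) := by exact_mod_cast Nat.lt_succ_self _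
          _ ≤ _ := h1
    -- pathwise comparison on the good event
    have hpath : {ω | ((2 * n : ℕ) : ℕ∞) < T ω} ∩ G
        = {ω : Ω'' | ∀ k ≤ 2*n, (fun x => x ≤ 1) (0 + ∑ i ∈ Finset.Ico 0 (0+k), ξ i ω)} ∩ G := by
      ext ω
      simp only [Set.mem_inter_iff, Set.mem_setOf_eq, zero_add, hG]
      have hSsum : ∀ k, ∑ i ∈ Finset.Ico 0 k, ξ i ω = S k ω := by
        intro k
        rw [hS, Finset.range_eq_Ico]
      constructor
      · rintro ⟨hA, hGω⟩
        refine ⟨?_, hGω⟩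
        have hAk := (hTlt ω).1 hA
        have claim : ∀ k, k ≤ 2*n → S k ω ≤ 1 := by
          intro k
          induction k with
          | zero => intro _; rw [hS]; simp
          | succ k ih =>
            intro hk
            have h1 : S k ω ≤ 1 := ih (by omega)
            have h2 : S (k+1) ω = S k ω + ξ k ω := by rw [hS, hS, Finset.sum_range_succ]
            have h3 := hGω k (by omega)
            have h4 : S (k+1) ω ≠ 2 := fun hc => by have := hAk (k+1) hc; omega
            rcases h3 with h | h <;> omega
        intro k hk
        rw [hSsum k]
        exact claim k hk
      · rintro ⟨hB, hGω⟩
        refine ⟨?_, hGω⟩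
        rw [hTlt ω]
        intro k hk
        by_contra hc
        have hk2 : k ≤ 2*n := by omega
        have := hB k hk2
        rw [hSsum k, hk] at this
        omega
    have hsurgery : P'' {ω | ((2 * n : ℕ) : ℕ∞) < T ω}
        = P'' {ω : Ω'' | ∀ k ≤ 2*n, (fun x => x ≤ 1) (0 + ∑ i ∈ Finset.Ico 0 (0+k), ξ i ω)} := by
      have hA := (measure_inter_add_diff (μ := P'') {ω | ((2 * n : ℕ) : ℕ∞) < T ω} hGm).symm
      have hB := (measure_inter_add_diff (μ := P'')
        {ω : Ω'' | ∀ k ≤ 2*n, (fun x => x ≤ 1) (0 + ∑ i ∈ Finset.Ico 0 (0+k), ξ i ω)} hGm).symm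
      have hAd : P'' ({ω | ((2 * n : ℕ) : ℕ∞) < T ω} \ G) = 0 :=
        le_antisymm (hGc ▸ measure_mono (fun x hx => hx.2)) zero_le
      have hBd : P'' ({ω : Ω'' | ∀ k ≤ 2*n,
          (fun x => x ≤ 1) (0 + ∑ i ∈ Finset.Ico 0 (0+k), ξ i ω)} \ G) = 0 :=
        le_antisymm (hGc ▸ measure_mono (fun x hx => hx.2)) zero_le
      rw [hA, hB, hAd, hBd, hpath]
    rw [hsurgery, hws]
    have hbridge := qC_eq_rC n 1
    rw [show (2:ℤ) - 2*1 = 0 from by ring] at hbridge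
    rw [hbridge]
    rfl
  exact ⟨by rw [hmodel, hlazy], by rw [hmodel, hssrw]⟩
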